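/- Let k be a perfect field of characteristic p, let R be a finitely generated k-algebra, let M be a finitely generated R-module, and let κ be a p^{-e}-linear map on M for some e ≥ 1. If (N_i)_{i ∈ ℕ} is a descending chain of R-submodules of M (N_i ⊇ N_{i+1} for all i) such that κ maps each N_i onto itself (κ(N_i) = N_i as sets, for every i), then the chain is eventually constant: there exists i₀ such that N_i = N_{i₀} for all i ≥ i₀. -/

import Mathlib

section Aux

variable {k R M : Type*} [Field k] [CommRing R] [Algebra k R]
  [AddCommGroup M] [Module k M] [Module R M] [IsScalarTower k R M]
  {ι : Type*} [Fintype ι]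

/-- The monomial `∏ i, X i ^ a i`. -/
private def monA (X : ι → R) (a : ι → ℕ) : R := ∏ i, X i ^ a i

private theorem monA_add (X : ι → R) (a b : ι → ℕ) :
    monA X (a + b) = monA X a * monA X b := by
  simp [monA, pow_add, Finset.prod_mul_distrib]

private theorem monA_zero (X : ι → R) : monA X 0 = 1 := by simp [monA]

private theorem monA_decomp (X : ι → R) (q : ℕ) (_hq0 : 0 < q) (a : ι → ℕ) :
    monA X a = (monA X (fun i => a i / q)) ^ q * monA X (fun i => a i % q) := by
  rw [monA, monA, monA, ← Finset.prod_pow, ← Finset.prod_mul_distrib]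
  refine Finset.prod_congr rfl fun i _ => ?_
  rw [← pow_mul, ← pow_add]
  congr 1
  exact (Nat.div_add_mod' (a i) q).symm

private theorem monA_of_closure (X : ι → R) {u : R}
    (hu : u ∈ Submonoid.closure (Set.range X)) : ∃ a : ι → ℕ, u = monA X a := by
  classical
  induction hu using Submonoid.closure_induction with
  | mem x hx =>
    obtain ⟨i, rfl⟩ := hx
    refine ⟨Pi.single i 1, ?_⟩
    rw [monA, Finset.prod_eq_single i]
    · rw [Pi.single_eq_same, pow_one]
    · intro j _ hj; rw [Pi.single_eq_of_ne hj, pow_zero]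
    · intro h; exact absurd (Finset.mem_univ i) h
  | one => exact ⟨0, (monA_zero X).symm⟩
  | mul x y hx hy ihx ihy =>
    obtain ⟨a, rfl⟩ := ihx
    obtain ⟨b, rfl⟩ := ihy
    exact ⟨a + b, (monA_add X a b).symm⟩

/-- The degree-`d` filtration piece of `M`. -/
private def MMs (X : ι → R) (G : Finset M) (d : ℕ) : Set M :=
  {z | ∃ a : ι → ℕ, (∀ i, a i ≤ d) ∧ ∃ g ∈ G, z = monA X a • g}

private def MM (k : Type*) [Field k] [Algebra k R] [Module k M] [IsScalarTower k R M]
    (X : ι → R) (G : Finset M) (d : ℕ) : Submodule k M :=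
  Submodule.span k (MMs X G d)

private theorem MM_mono (X : ι → R) (G : Finset M) {d d' : ℕ} (h : d ≤ d') :
    MM k X G d ≤ MM k X G d' := by
  apply Submodule.span_mono
  rintro z ⟨a, ha, g, hg, rfl⟩
  exact ⟨a, fun i => (ha i).trans h, g, hg, rfl⟩

private theorem smul_MM (X : ι → R) (G : Finset M) (a : ι → ℕ) (e : ℕ)
    (ha : ∀ i, a i ≤ e) (d : ℕ) {m : M} (hm : m ∈ MM k X G d) :
    monA X a • m ∈ MM k X G (d + e) := by
  induction hm using Submodule.span_induction with
  | mem z hz =>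
    obtain ⟨b, hb, g, hg, rfl⟩ := hz
    rw [smul_smul, ← monA_add]
    refine Submodule.subset_span ⟨a + b, fun i => ?_, g, hg, rfl⟩
    have h1 := hb i; have h2 := ha i
    simp only [Pi.add_apply]; omega
  | zero => rw [smul_zero]; exact Submodule.zero_mem _
  | add x y hx hy ihx ihy => rw [smul_add]; exact Submodule.add_mem _ ihx ihy
  | smul c x hx ih =>
    rw [← algebraMap_smul R c x, smul_smul, mul_comm, ← smul_smul, algebraMap_smul]
    exact Submodule.smul_mem _ c ih

private theorem exhaustion (X : ι → R) (G : Finset M)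
    (hX : Algebra.adjoin k (Set.range X) = ⊤) (hG : Submodule.span R (↑G : Set M) = ⊤)
    (m : M) : ∃ d, m ∈ MM k X G d := by
  -- first, stability under the R-action
  have hR : ∀ r : R, ∀ d : ℕ, ∀ m : M, m ∈ MM k X G d → ∃ d', r • m ∈ MM k X G d' := by
    intro r
    have hr : r ∈ Submodule.span k (Submonoid.closure (Set.range X) : Set R) := by
      rw [← Algebra.adjoin_eq_span, hX]; trivial
    induction hr using Submodule.span_induction with
    | mem u hu =>
      obtain ⟨a, rfl⟩ := monA_of_closure X hu
      intro d m hm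
      refine ⟨d + ∑ i, a i, smul_MM X G a _ (fun i => ?_) d hm⟩
      exact Finset.single_le_sum (f := a) (fun j _ => Nat.zero_le _) (Finset.mem_univ i)
    | zero => intro d m hm; exact ⟨0, by rw [zero_smul]; exact Submodule.zero_mem _⟩
    | add x y hx hy ihx ihy =>
      intro d m hm
      obtain ⟨d1, h1⟩ := ihx d m hm
      obtain ⟨d2, h2⟩ := ihy d m hm
      refine ⟨max d1 d2, ?_⟩
      rw [add_smul]
      exact Submodule.add_mem _ (MM_mono X G (le_max_left d1 d2) h1)
        (MM_mono X G (le_max_right d1 d2) h2)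
    | smul c x hx ih =>
      intro d m hm
      obtain ⟨d', h'⟩ := ih d m hm
      exact ⟨d', by rw [smul_assoc]; exact Submodule.smul_mem _ c h'⟩
  have hm : m ∈ Submodule.span R (↑G : Set M) := by rw [hG]; trivial
  induction hm using Submodule.span_induction with
  | mem g hg =>
    exact ⟨0, Submodule.subset_span ⟨0, fun i => le_refl 0, g, hg, by
      rw [monA_zero, one_smul]⟩⟩
  | zero => exact ⟨0, Submodule.zero_mem _⟩
  | add x y hx hy ihx ihy =>
    obtain ⟨d1, h1⟩ := ihx
    obtain ⟨d2, h2⟩ := ihy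
    exact ⟨max d1 d2, Submodule.add_mem _ (MM_mono X G (le_max_left d1 d2) h1)
      (MM_mono X G (le_max_right d1 d2) h2)⟩
  | smul r x hx ih =>
    obtain ⟨d, hd⟩ := ih
    exact hR r d x hd

private theorem finset_bound (X : ι → R) (G : Finset M) (t : Finset M)
    (h : ∀ z ∈ t, ∃ d, z ∈ MM k X G d) : ∃ C, ∀ z ∈ t, z ∈ MM k X G C := by
  classical
  induction t using Finset.induction_on with
  | empty => exact ⟨0, by simp⟩
  | @insert z t' hz ih =>
    obtain ⟨C1, hC1⟩ := ih (fun w hw => h w (Finset.mem_insert_of_mem hw))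
    obtain ⟨C2, hC2⟩ := h z (Finset.mem_insert_self z t')
    refine ⟨max C1 C2, fun w hw => ?_⟩
    rcases Finset.mem_insert.mp hw with rfl | hw'
    · exact MM_mono X G (le_max_right C1 C2) hC2
    · exact MM_mono X G (le_max_left C1 C2) (hC1 w hw')

end Aux

private theorem aux_dcc {k R M : Type*} [Field k] [CommRing R] [Algebra k R]
    [AddCommGroup M] [Module k M] [Module R M] [IsScalarTower k R M]
    [Algebra.FiniteType k R] [Module.Finite R M]
    (q : ℕ) (hq : 2 ≤ q)
    (hroot : ∀ a : k, ∃ b : k, b ^ q = a)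
    (κ : M → M)
    (hadd : ∀ x y : M, κ (x + y) = κ x + κ y)
    (hlin : ∀ (r : R) (m : M), κ (r ^ q • m) = r • κ m)
    (N : ℕ → Submodule R M)
    (hdesc : ∀ i, N (i + 1) ≤ N i)
    (hsurj : ∀ i, κ '' (N i : Set M) = (N i : Set M)) :
    ∃ i₀, ∀ i ≥ i₀, N i = N i₀ := by
  classical
  have hq0 : 0 < q := by omega
  obtain ⟨s, hs⟩ := ‹Algebra.FiniteType k R›.1
  set ι := {x : R // x ∈ s} with hι
  let X : ι → R := fun i => i.1
  have hX : Algebra.adjoin k (Set.range X) = ⊤ := by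
    rwa [Subtype.range_coe_subtype, Finset.setOf_mem]
  obtain ⟨G, hG⟩ := Module.Finite.fg_top (R := R) (M := M)
  haveI : IsNoetherianRing R := Algebra.FiniteType.isNoetherianRing k R
  -- κ kills zero, and is semilinear for k-scalars
  have hκ0 : κ 0 = 0 := by
    have h := hadd 0 0
    rw [add_zero] at h
    exact left_eq_add.mp h
  -- semilinearity for `k`-scalars
  have hκk : ∀ (c : k) (x : M), ∃ μ : k, κ (c • x) = μ • κ x := by
    intro c x
    obtain ⟨μ, hμ⟩ := hroot c
    refine ⟨μ, ?_⟩
    have h1 : c • x = (algebraMap k R μ) ^ q • x := by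
      rw [← map_pow, hμ, algebraMap_smul]
    rw [h1, hlin, algebraMap_smul]
  -- the uniform constant `C`
  have hCex : ∃ C : ℕ, ∀ (c : ι → ℕ), (∀ i, c i < q) → ∀ g ∈ G,
      κ (monA X c • g) ∈ MM k X G C := by
    let t : Finset M := ((Finset.univ : Finset (ι → Fin q)) ×ˢ G).image
      (fun cg => κ (monA X (fun i => ((cg.1 i : ℕ))) • cg.2))
    obtain ⟨C, hC⟩ := finset_bound X G t (fun z _ => exhaustion X G hX hG z)
    refine ⟨C, fun c hc g hg => ?_⟩
    apply hC
    apply Finset.mem_image.mpr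
    refine ⟨(fun i => ⟨c i, hc i⟩, g), ?_, rfl⟩
    exact Finset.mem_product.mpr ⟨Finset.mem_univ _, hg⟩
  obtain ⟨C, hC⟩ := hCex
  -- κ divides degrees by q
  have hκMM : ∀ d : ℕ, ∀ x ∈ MM k X G d, κ x ∈ MM k X G (d / q + C) := by
    intro d x hx
    induction hx using Submodule.span_induction with
    | mem z hz =>
      obtain ⟨a, ha, g, hg, rfl⟩ := hz
      rw [monA_decomp X q hq0 a, mul_smul, hlin]
      have h1 : κ (monA X (fun i => a i % q) • g) ∈ MM k X G C :=
        hC _ (fun i => Nat.mod_lt _ hq0) g hg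
      have h2 := smul_MM X G (fun i => a i / q) (d / q)
        (fun i => Nat.div_le_div_right (ha i)) C h1
      exact MM_mono X G (by omega) h2
    | zero => rw [hκ0]; exact Submodule.zero_mem _
    | add x y hx hy ihx ihy => rw [hadd]; exact Submodule.add_mem _ ihx ihy
    | smul c x hx ih =>
      obtain ⟨μ, hμ⟩ := hκk c x
      rw [hμ]; exact Submodule.smul_mem _ μ ih
  -- decomposition of ring elements into `q`-th-power multiples of small monomials
  set DD : Set R := {w | ∃ (sR : R) (c : ι → ℕ), (∀ i, c i < q) ∧ w = sR ^ q * monA X c}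
    with hDDdef
  have hDDsmul : ∀ t ∈ AddSubmonoid.closure DD, ∀ c : k,
      c • t ∈ AddSubmonoid.closure DD := by
    intro t ht
    induction ht using AddSubmonoid.closure_induction with
    | mem w hw =>
      intro c
      obtain ⟨sR, cc, hcc, rfl⟩ := hw
      obtain ⟨μ, hμ⟩ := hroot c
      apply AddSubmonoid.subset_closure
      refine ⟨algebraMap k R μ * sR, cc, hcc, ?_⟩
      rw [Algebra.smul_def, mul_pow, ← map_pow, hμ, mul_assoc]
    | zero => intro c; rw [smul_zero]; exact AddSubmonoid.zero_mem _
    | add x y hx hy ihx ihy =>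
      intro c; rw [smul_add]; exact AddSubmonoid.add_mem _ (ihx c) (ihy c)
  have hdecomp : ∀ r : R, r ∈ AddSubmonoid.closure DD := by
    intro r
    have hr : r ∈ Submodule.span k ((Submonoid.closure (Set.range X) : Submonoid R) : Set R) := by
      rw [← Algebra.adjoin_eq_span, hX]; trivial
    induction hr using Submodule.span_induction with
    | mem u hu =>
      obtain ⟨a, rfl⟩ := monA_of_closure X hu
      exact AddSubmonoid.subset_closure
        ⟨monA X (fun i => a i / q), fun i => a i % q, fun i => Nat.mod_lt _ hq0,
          monA_decomp X q hq0 a⟩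
    | zero => exact AddSubmonoid.zero_mem _
    | add x y hx hy ihx ihy => exact AddSubmonoid.add_mem _ ihx ihy
    | smul c x hx ih => exact hDDsmul x ih c
  -- the degree-improving step for κ-surjective submodules
  have hstep : ∀ (P : Submodule R M), κ '' (P : Set M) = (P : Set M) → ∀ d : ℕ,
      P ≤ Submodule.span R ((P : Set M) ∩ (MM k X G d : Set M)) →
      P ≤ Submodule.span R ((P : Set M) ∩ (MM k X G ((d + (q - 1)) / q + C) : Set M)) := by
    intro P hsP d hgen
    have claim : ∀ y, y ∈ Submodule.span R ((P : Set M) ∩ (MM k X G d : Set M)) →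
        ∀ c : ι → ℕ, (∀ i, c i < q) →
        κ (monA X c • y) ∈
          Submodule.span R ((P : Set M) ∩ (MM k X G ((d + (q - 1)) / q + C) : Set M)) := by
      intro y hy
      induction hy using Submodule.span_induction with
      | mem z hz =>
        intro c hc
        obtain ⟨hzP, hzMM⟩ := hz
        have h1 : monA X c • z ∈ P := Submodule.smul_mem _ _ hzP
        have h2 : monA X c • z ∈ MM k X G (d + (q - 1)) :=
          smul_MM X G c (q - 1) (fun i => by have := hc i; omega) d hzMM
        have h3 : κ (monA X c • z) ∈ MM k X G ((d + (q - 1)) / q + C) := hκMM _ _ h2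
        have h4 : κ (monA X c • z) ∈ (P : Set M) := by
          rw [← hsP]; exact ⟨_, h1, rfl⟩
        exact Submodule.subset_span ⟨h4, h3⟩
      | zero => intro c hc; rw [smul_zero, hκ0]; exact Submodule.zero_mem _
      | add x y hx hy ihx ihy =>
        intro c hc
        rw [smul_add, hadd]
        exact Submodule.add_mem _ (ihx c hc) (ihy c hc)
      | smul r y hy ih =>
        intro c hc
        rw [smul_smul]
        have hsub : ∀ w ∈ AddSubmonoid.closure DD,
            κ (w • y) ∈
              Submodule.span R ((P : Set M) ∩ (MM k X G ((d + (q - 1)) / q + C) : Set M)) := by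
          intro w hw
          induction hw using AddSubmonoid.closure_induction with
          | mem w' hw' =>
            obtain ⟨sR, c', hc', rfl⟩ := hw'
            rw [mul_smul, hlin]
            exact Submodule.smul_mem _ sR (ih c' hc')
          | zero => rw [zero_smul, hκ0]; exact Submodule.zero_mem _
          | add w1 w2 h1 h2 ih1 ih2 =>
            rw [add_smul, hadd]; exact Submodule.add_mem _ ih1 ih2
        exact hsub _ (hdecomp _)
    intro x hx
    have hx' : x ∈ κ '' (P : Set M) := by rw [hsP]; exact hx
    obtain ⟨y, hyP, rfl⟩ := hx'
    have := claim y (hgen hyP) 0 (fun i => hq0)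
    rwa [monA_zero, one_smul] at this
  -- every κ-surjective submodule is generated in degrees ≤ B
  have huniform : ∀ (P : Submodule R M), κ '' (P : Set M) = (P : Set M) →
      P = Submodule.span R ((P : Set M) ∩ (MM k X G (2 * C + 3) : Set M)) := by
    intro P hsP
    have hatP : Submodule.span R ((P : Set M) ∩ (MM k X G (2 * C + 3) : Set M)) ≤ P :=
      Submodule.span_le.mpr (fun z hz => hz.1)
    obtain ⟨F, hF⟩ := (IsNoetherian.noetherian P : P.FG)
    obtain ⟨d₀, hd₀⟩ := finset_bound X G F (fun z _ => exhaustion X G hX hG z)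
    have hgen0 : P ≤ Submodule.span R ((P : Set M) ∩ (MM k X G d₀ : Set M)) := by
      rw [← hF]
      apply Submodule.span_mono
      intro z hz
      exact ⟨Submodule.subset_span hz, hd₀ z hz⟩
    have down : ∀ d : ℕ, P ≤ Submodule.span R ((P : Set M) ∩ (MM k X G d : Set M)) →
        P ≤ Submodule.span R ((P : Set M) ∩ (MM k X G (2 * C + 3) : Set M)) := by
      intro d
      induction d using Nat.strong_induction_on with
      | _ d IH =>
        intro hgen
        by_cases hdB : d ≤ 2 * C + 3
        · exact le_trans hgen
            (Submodule.span_mono (Set.inter_subset_inter_right _ (MM_mono X G hdB)))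
        · push_neg at hdB
          have hd1 : d + (q - 1) = (d - 1) + q := by omega
          have hdiv : ((d - 1) + q) / q = (d - 1) / q + 1 := Nat.add_div_right _ hq0
          have h3 : (d - 1) / q ≤ (d - 1) / 2 := Nat.div_le_div_left hq (by norm_num)
          have h4 : (d - 1) / 2 * 2 ≤ d - 1 := Nat.div_mul_le_self _ _
          have hlt : (d + (q - 1)) / q + C < d := by
            rw [hd1, hdiv]
            omega
          exact IH _ hlt (hstep P hsP d hgen)
    exact le_antisymm (down d₀ hgen0) hatP
  -- finite-dimensionality of the degree-B part
  haveI hfinB : FiniteDimensional k (MM k X G (2 * C + 3)) := by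
    have hfin1 : ({a : ι → ℕ | ∀ i, a i ≤ 2 * C + 3}).Finite := by
      have hsub : {a : ι → ℕ | ∀ i, a i ≤ 2 * C + 3} ⊆
          Set.pi Set.univ (fun _ : ι => Set.Iic (2 * C + 3)) := by
        intro a ha i _
        exact ha i
      exact (Set.Finite.pi (fun _ => Set.finite_Iic _)).subset hsub
    have himg : MMs X G (2 * C + 3) ⊆ (fun pr : (ι → ℕ) × M => monA X pr.1 • pr.2) ''
        ({a : ι → ℕ | ∀ i, a i ≤ 2 * C + 3} ×ˢ (↑G : Set M)) := by
      rintro z ⟨a, ha, g, hg, rfl⟩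
      exact ⟨(a, g), ⟨ha, hg⟩, rfl⟩
    exact FiniteDimensional.span_of_finite k (((hfin1.prod G.finite_toSet).image _).subset himg)
  -- the chain of finite-dimensional slices
  set W : ℕ → Submodule k M :=
    fun i => (Submodule.restrictScalars k (N i)) ⊓ MM k X G (2 * C + 3) with hWdef
  have hWcoe : ∀ i, (W i : Set M) = (N i : Set M) ∩ (MM k X G (2 * C + 3) : Set M) := by
    intro i
    rw [hWdef]
    rw [Submodule.coe_inf, Submodule.coe_restrictScalars]
  haveI hWfd : ∀ i, FiniteDimensional k (W i) :=
    fun i => Submodule.finiteDimensional_of_le inf_le_right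
  have hNanti : Antitone N := antitone_nat_of_succ_le hdesc
  have hWanti : ∀ i j, i ≤ j → W j ≤ W i := by
    intro i j hij x hx
    rw [Submodule.mem_inf] at hx ⊢
    exact ⟨(Submodule.restrictScalars_mem _ _ _).mpr
      (hNanti hij ((Submodule.restrictScalars_mem _ _ _).mp hx.1)), hx.2⟩
  have hmin : ∃ i₀ : ℕ, ∀ i, Module.finrank k (W i₀) ≤ Module.finrank k (W i) := by
    obtain ⟨i₀, hi₀⟩ := Nat.sInf_mem
      (⟨Module.finrank k (W 0), 0, rfl⟩ : (Set.range fun i => Module.finrank k (W i)).Nonempty)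
    refine ⟨i₀, fun i => ?_⟩
    have heq : Module.finrank k (W i₀) =
        sInf (Set.range fun j => Module.finrank k (W j)) := hi₀
    rw [heq]
    exact Nat.sInf_le ⟨i, rfl⟩
  obtain ⟨i₀, hi₀⟩ := hmin
  refine ⟨i₀, fun i hi => ?_⟩
  have hWeq : W i = W i₀ := by
    haveI := hWfd i₀
    exact Submodule.eq_of_le_of_finrank_le (hWanti i₀ i hi) (hi₀ i)
  have h1 := huniform (N i) (hsurj i)
  have h2 := huniform (N i₀) (hsurj i₀)
  rw [h1, h2, ← hWcoe i, ← hWcoe i₀, hWeq]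

theorem descending_chain_condition_cartier {k : Type*} [Field k] [PerfectField k]
    (p : ℕ) [Fact p.Prime] [CharP k p]
    {R : Type*} [CommRing R] [Algebra k R] [Algebra.FiniteType k R]
    {M : Type*} [AddCommGroup M] [Module R M] [Module.Finite R M]
    (e : ℕ) (he : 1 ≤ e)
    (κ : M → M)
    (hadd : ∀ x y : M, κ (x + y) = κ x + κ y)
    (hlin : ∀ (r : R) (m : M), κ (r ^ p ^ e • m) = r • κ m)
    (N : ℕ → Submodule R M)
    (hdesc : ∀ i, N (i + 1) ≤ N i)
    (hsurj : ∀ i, κ '' (N i : Set M) = (N i : Set M)) :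
    ∃ i₀, ∀ i ≥ i₀, N i = N i₀ := by
  letI : Module k M := Module.compHom M (algebraMap k R)
  letI : IsScalarTower k R M := IsScalarTower.of_algebraMap_smul fun r x => rfl
  haveI : ExpChar k p := ExpChar.prime Fact.out
  have hq : 2 ≤ p ^ e :=
    le_trans (Fact.out : p.Prime).two_le (Nat.le_self_pow (by omega) p)
  have hroot : ∀ a : k, ∃ b : k, b ^ p ^ e = a := by
    have key : ∀ (n : ℕ) (a : k), ∃ b : k, b ^ p ^ n = a := by
      intro n
      induction n with
      | zero => exact fun a => ⟨a, by simp⟩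
      | succ n ih =>
        intro a
        obtain ⟨c, hc⟩ := ih a
        obtain ⟨b, hb⟩ := surjective_frobenius k p c
        have hb' : b ^ p = c := by rw [← frobenius_def]; exact hb
        refine ⟨b, ?_⟩
        rw [pow_succ, mul_comm, pow_mul, hb', hc]
    exact key e
  exact aux_dcc (p ^ e) hq hroot κ hadd hlin N hdesc hsurj
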